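/- Let 0 < b < a, let A be the 2 × 2 real matrix with rows A₁ = (a, a) and A₂ = (b, −b), let β ∈ ℝ², and let f : ℝ² → ℝ, f(x) = (1/2)·‖Ax − β‖². Set L = 2a² and μ = 2b² (so every eigenvalue of AᵀA lies in [μ, L]). Let x, w ∈ ℝ² satisfy x − w = (c, −c) for some c ≠ 0, and set c_{j,i} = A_{j,i}·(x_i − w_i) for j, i ∈ {1, 2}. On a probability space let J be uniform on {1, 2} and let Y_{j,i} (j, i ∈ {1,2}) be square-integrable real random variables such that for each fixed j the pair (Y_{j,1}, Y_{j,2}) is independent, E[Y_{j,i}] = c_{j,i} and E[Y_{j,i}²] = ω·c_{j,i}² for some ω ≥ 1, with J independent of all the Y_{j,i}. Define g = 2·(Y_{J,1} + Y_{J,2})·A_J + ∇f(w). Then E[‖g − ∇f(x)‖²] ≥ (ω − 1)·(L²/(2μ²))·‖∇f(x) − ∇f(w)‖². -/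

import Mathlib

open MeasureTheory ProbabilityTheory
open scoped RealInnerProductSpace ENNReal

/-- The `j`-th row of the matrix `A`, viewed as a vector of `ℝ^d`. -/
noncomputable def matRow {s d : ℕ} (A : Matrix (Fin s) (Fin d) ℝ) (j : Fin s) :
    EuclideanSpace ℝ (Fin d) :=
  WithLp.toLp 2 (fun t => A j t)

open InnerProductSpace

set_option maxHeartbeats 1000000

lemma inner_matRow (A : Matrix (Fin 2) (Fin 2) ℝ) (j : Fin 2) (u : EuclideanSpace ℝ (Fin 2)) :
    ⟪matRow A j, u⟫ = ∑ t, A j t * u t := by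
  simp [PiLp.inner_apply, matRow, RCLike.inner_apply, conj_trivial, mul_comm]

lemma gradient_mse (A : Matrix (Fin 2) (Fin 2) ℝ) (βv : Fin 2 → ℝ) (v : EuclideanSpace ℝ (Fin 2)) :
    gradient (fun v : EuclideanSpace ℝ (Fin 2) =>
        (1 / 2 : ℝ) * ∑ j, ((∑ t, A j t * v t) - βv j) ^ 2) v
      = ∑ j, ((∑ t, A j t * v t) - βv j) • matRow A j := by
  have hfun : (fun v : EuclideanSpace ℝ (Fin 2) =>
      (1 / 2 : ℝ) * ∑ j, ((∑ t, A j t * v t) - βv j) ^ 2)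
      = fun v => (1 / 2 : ℝ) * ∑ j, (⟪matRow A j, v⟫ - βv j) * (⟪matRow A j, v⟫ - βv j) := by
    funext u; simp [inner_matRow, ← sq]
  have H : HasGradientAt (fun v : EuclideanSpace ℝ (Fin 2) =>
      (1 / 2 : ℝ) * ∑ j, (⟪matRow A j, v⟫ - βv j) * (⟪matRow A j, v⟫ - βv j))
      (∑ j, (⟪matRow A j, v⟫ - βv j) • matRow A j) v := by
    rw [hasGradientAt_iff_hasFDerivAt]
    have hder : HasFDerivAt (fun v : EuclideanSpace ℝ (Fin 2) =>
        (1 / 2 : ℝ) * ∑ j, (⟪matRow A j, v⟫ - βv j) * (⟪matRow A j, v⟫ - βv j))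
        ((1 / 2 : ℝ) • ∑ j, ((⟪matRow A j, v⟫ - βv j) • (innerSL ℝ (matRow A j))
          + (⟪matRow A j, v⟫ - βv j) • (innerSL ℝ (matRow A j)))) v := by
      apply HasFDerivAt.const_mul
      apply HasFDerivAt.fun_sum
      intro j _
      have h1 := ((innerSL ℝ (matRow A j)).hasFDerivAt (x := v)).sub_const (βv j)
      exact h1.mul h1
    have heq : (toDual ℝ (EuclideanSpace ℝ (Fin 2)))
        (∑ j, (⟪matRow A j, v⟫ - βv j) • matRow A j)
        = (1 / 2 : ℝ) • ∑ j, ((⟪matRow A j, v⟫ - βv j) • (innerSL ℝ (matRow A j))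
          + (⟪matRow A j, v⟫ - βv j) • (innerSL ℝ (matRow A j))) := by
      ext u
      simp [toDual_apply_apply, sum_inner, real_inner_smul_left, Fin.sum_univ_two,
        ContinuousLinearMap.sum_apply, innerSL_apply_apply]
      ring
    rw [heq]; exact hder
  rw [hfun, H.gradient]
  simp only [inner_matRow]

/-- **Lower-bound construction for DVPL-Katyusha with scalar compression on the MSE loss**,
showing the efficient Lipschitz constant can be proportional to `(ω − 1)·L³/μ²`: let
`0 < b < a`, `A = !![a, a; b, −b]`, `f(x) = (1/2)·‖Ax − β‖²`, `L = 2a²`, `μ = 2b²`, and let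
`x − w = (c, −c)` with `c ≠ 0` (orthogonal to the top row `A₁`). The two workers each own
one coordinate and transmit exact-second-moment unbiased compressions `Y_{j,i}` of their
scalar contributions `c_{j,i} = A_{j,i}(x_i − w_i)` (independent across `i` for fixed `j`),
a sample `J` is drawn uniformly on `{1, 2}` independently of the `Y_{j,i}`, and
`g = 2·(Y_{J,1} + Y_{J,2})·A_J + ∇f(w)`. Then
`E[‖g − ∇f(x)‖²] ≥ (ω − 1)·(L²/(2μ²))·‖∇f(x) − ∇f(w)‖²`. -/
theorem dvpl_katyusha_scalar_compression_lower_bound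
    {a b : ℝ} (hb : 0 < b) (hba : b < a)
    (A : Matrix (Fin 2) (Fin 2) ℝ) (hA : A = !![a, a; b, -b])
    (βv : Fin 2 → ℝ)
    (f : EuclideanSpace ℝ (Fin 2) → ℝ)
    (hf : f = fun v => (1 / 2 : ℝ) * ∑ j, ((∑ t, A j t * v t) - βv j) ^ 2)
    {L μ : ℝ} (hL : L = 2 * a ^ 2) (hμ : μ = 2 * b ^ 2)
    (x w : EuclideanSpace ℝ (Fin 2))
    {cc : ℝ} (hcc : cc ≠ 0)
    (hxw0 : x 0 - w 0 = cc) (hxw1 : x 1 - w 1 = -cc)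
    (c : Fin 2 → Fin 2 → ℝ)
    (hc : ∀ j i : Fin 2, c j i = A j i * (x i - w i))
    {Ω : Type*} [MeasureSpace Ω] [IsProbabilityMeasure (ℙ : Measure Ω)]
    (J : Ω → Fin 2) (hJmeas : Measurable J)
    (hJunif : ∀ j : Fin 2, ℙ {ω | J ω = j} = (2 : ℝ≥0∞)⁻¹)
    (Y : Fin 2 → Fin 2 → Ω → ℝ)
    (hYmeas : ∀ j i, Measurable (Y j i))
    (hY2 : ∀ j i, MemLp (Y j i) 2 ℙ)
    (hYindep : ∀ j, IndepFun (Y j 0) (Y j 1) ℙ)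
    {ω₀ : ℝ} (hω₀ : 1 ≤ ω₀)
    (hYmean : ∀ j i, ∫ ω, Y j i ω ∂ℙ = c j i)
    (hYsecond : ∀ j i, ∫ ω, (Y j i ω) ^ 2 ∂ℙ = ω₀ * (c j i) ^ 2)
    (hJY : IndepFun J (fun ω => fun q : Fin 2 × Fin 2 => Y q.1 q.2 ω) ℙ)
    (g : Ω → EuclideanSpace ℝ (Fin 2))
    (hg : ∀ ω, g ω = (2 * (Y (J ω) 0 ω + Y (J ω) 1 ω)) • matRow A (J ω) + gradient f w) :
    ∫ ω, ‖g ω - gradient f x‖ ^ 2 ∂ℙ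
      ≥ (ω₀ - 1) * (L ^ 2 / (2 * μ ^ 2)) * ‖gradient f x - gradient f w‖ ^ 2 := by
  have hane : a ≠ 0 := ne_of_gt (hb.trans hba)
  have hbne : b ≠ 0 := ne_of_gt hb
  -- matrix entries
  have e00 : A 0 0 = a := by rw [hA]; simp
  have e01 : A 0 1 = a := by rw [hA]; simp
  have e10 : A 1 0 = b := by rw [hA]; simp
  have e11 : A 1 1 = -b := by rw [hA]; simp
  -- values of c
  have hc00 : c 0 0 = a * cc := by rw [hc, e00, hxw0]
  have hc01 : c 0 1 = -(a * cc) := by rw [hc, e01, hxw1]; ring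
  have hc10 : c 1 0 = b * cc := by rw [hc, e10, hxw0]
  have hc11 : c 1 1 = b * cc := by rw [hc, e11, hxw1]; ring
  -- the displacement of gradients
  set Dv : EuclideanSpace ℝ (Fin 2) := (2 * (b * cc)) • matRow A 1 with hDvdef
  have hx0 : x 0 = w 0 + cc := by linarith
  have hx1 : x 1 = w 1 - cc := by linarith
  have hD : gradient f x - gradient f w = Dv := by
    rw [hf, gradient_mse A βv x, gradient_mse A βv w, hDvdef]
    ext t
    fin_cases t <;>
      simp [Fin.sum_univ_two, matRow, e00, e01, e10, e11, hx0, hx1] <;> ring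
  -- inner-product and norm facts
  have hip : ∀ j k : Fin 2, ⟪matRow A j, matRow A k⟫ = A j 0 * A k 0 + A j 1 * A k 1 := by
    intro j k; rw [inner_matRow]; simp [Fin.sum_univ_two, matRow]
  have hn : ∀ j : Fin 2, ‖matRow A j‖ ^ 2 = A j 0 ^ 2 + A j 1 ^ 2 := by
    intro j; rw [← real_inner_self_eq_norm_sq, hip]; ring
  have hn0 : ‖matRow A 0‖ ^ 2 = 2 * a ^ 2 := by rw [hn, e00, e01]; ring
  have hn1 : ‖matRow A 1‖ ^ 2 = 2 * b ^ 2 := by rw [hn, e10, e11]; ring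
  have hipD0 : ⟪matRow A 0, Dv⟫ = 0 := by
    rw [hDvdef, real_inner_smul_right, hip, e00, e01, e10, e11]; ring
  have hipD1 : ⟪matRow A 1, Dv⟫ = 4 * b ^ 3 * cc := by
    rw [hDvdef, real_inner_smul_right, hip, e10, e11]; ring
  have hnD : ‖Dv‖ ^ 2 = 8 * b ^ 4 * cc ^ 2 := by
    rw [hDvdef, norm_smul, mul_pow, Real.norm_eq_abs, sq_abs, hn1]; ring
  -- the auxiliary functions
  set Yv : Ω → (Fin 2 × Fin 2 → ℝ) := fun ω => fun q : Fin 2 × Fin 2 => Y q.1 q.2 ω with hYvdef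
  set F : Fin 2 → (Fin 2 × Fin 2 → ℝ) → ℝ := fun j y =>
    (4 * ‖matRow A j‖ ^ 2) * (y (j, 0) + y (j, 1)) ^ 2
      - (4 * ⟪matRow A j, Dv⟫) * (y (j, 0) + y (j, 1)) + ‖Dv‖ ^ 2 with hFdef
  -- pointwise identity
  have hpt : ∀ ω, ‖g ω - gradient f x‖ ^ 2 = F (J ω) (Yv ω) := by
    intro ω
    have h1 : g ω - gradient f x
        = (2 * (Y (J ω) 0 ω + Y (J ω) 1 ω)) • matRow A (J ω) - Dv := by
      rw [hg ω, ← hD]; abel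
    rw [h1, norm_sub_sq_real, norm_smul, real_inner_smul_left, Real.norm_eq_abs]
    simp only [hFdef, hYvdef, mul_pow, sq_abs]
    ring
  have hsum : ∀ ω, F (J ω) (Yv ω)
      = ∑ j : Fin 2, (if J ω = j then (1 : ℝ) else 0) * F j (Yv ω) := by
    intro ω
    rw [Fin.sum_univ_two]
    rcases eq_or_ne (J ω) 0 with h | h
    · simp [h]
    · rw [Fin.eq_one_of_ne_zero _ h]; simp
  -- integrability
  have hYint : ∀ j i, Integrable (Y j i) ℙ := fun j i => (hY2 j i).integrable one_le_two
  have hSsqInt : ∀ j : Fin 2, Integrable (fun ω => (Y j 0 ω + Y j 1 ω) ^ 2) ℙ :=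
    fun j => ((hY2 j 0).add (hY2 j 1)).integrable_sq
  have hFint : ∀ j : Fin 2, Integrable (fun ω => F j (Yv ω)) ℙ := by
    intro j
    exact (((hSsqInt j).const_mul _).sub
      (((hYint j 0).add (hYint j 1)).const_mul _)).add (integrable_const _)
  have hindmeas : ∀ j : Fin 2, MeasurableSet {ω : Ω | J ω = j} :=
    fun j => hJmeas (measurableSet_singleton j)
  have hFmeas : ∀ j : Fin 2, Measurable (F j) := by
    intro j
    apply Measurable.add
    apply Measurable.sub
    · exact (((measurable_pi_apply (j, 0)).add (measurable_pi_apply (j, 1))).pow_const 2).const_mul _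
    · exact ((measurable_pi_apply (j, 0)).add (measurable_pi_apply (j, 1))).const_mul _
    · exact measurable_const
  have hIndep : ∀ j : Fin 2, IndepFun (fun ω => if J ω = j then (1 : ℝ) else 0)
      (fun ω => F j (Yv ω)) ℙ := by
    intro j
    exact hJY.comp (Measurable.of_discrete (f := fun k : Fin 2 => if k = j then (1 : ℝ) else 0))
      (hFmeas j)
  have hIndInt : ∀ j : Fin 2, Integrable (fun ω => if J ω = j then (1 : ℝ) else 0) ℙ := by
    intro j
    have h : Integrable ({ω : Ω | J ω = j}.indicator (fun _ => (1 : ℝ))) ℙ :=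
      (integrable_const 1).indicator (hindmeas j)
    have he : (fun ω => if J ω = j then (1 : ℝ) else 0)
        = {ω : Ω | J ω = j}.indicator (fun _ => (1 : ℝ)) := by
      funext ω; simp [Set.indicator_apply, Set.mem_setOf_eq]
    rw [he]; exact h
  have hIndVal : ∀ j : Fin 2, ∫ ω, (if J ω = j then (1 : ℝ) else 0) ∂ℙ = 1 / 2 := by
    intro j
    have h1 : ∫ ω, (if J ω = j then (1 : ℝ) else 0) ∂ℙ = (ℙ {ω | J ω = j}).toReal := by
      rw [← measureReal_def, ← integral_indicator_one (hindmeas j)]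
      congr 1; funext ω; simp [Set.indicator_apply]
    rw [h1, hJunif j]
    simp [ENNReal.toReal_inv]
  have hprod : ∀ j : Fin 2, ∫ ω, (if J ω = j then (1 : ℝ) else 0) * F j (Yv ω) ∂ℙ
      = (1 / 2) * ∫ ω, F j (Yv ω) ∂ℙ := by
    intro j
    have hre : (fun ω => (if J ω = j then (1 : ℝ) else 0) * F j (Yv ω))
        = (fun ω => if J ω = j then (1 : ℝ) else 0) * (fun ω => F j (Yv ω)) := rfl
    rw [hre, (hIndep j).integral_mul_eq_mul_integral (hIndInt j).aestronglyMeasurable (hFint j).aestronglyMeasurable, hIndVal j]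
  -- moments
  have hmul : ∀ j : Fin 2, ∫ ω, Y j 0 ω * Y j 1 ω ∂ℙ = c j 0 * c j 1 := by
    intro j
    have hre : (fun ω => Y j 0 ω * Y j 1 ω) = Y j 0 * Y j 1 := rfl
    rw [hre, (hYindep j).integral_mul_eq_mul_integral (hYint j 0).aestronglyMeasurable (hYint j 1).aestronglyMeasurable, hYmean, hYmean]
  have hM1 : ∀ j : Fin 2, ∫ ω, (Y j 0 ω + Y j 1 ω) ∂ℙ = c j 0 + c j 1 := by
    intro j
    rw [integral_add (hYint j 0) (hYint j 1), hYmean, hYmean]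
  have hM2 : ∀ j : Fin 2, ∫ ω, (Y j 0 ω + Y j 1 ω) ^ 2 ∂ℙ
      = ω₀ * ((c j 0) ^ 2 + (c j 1) ^ 2) + 2 * (c j 0 * c j 1) := by
    intro j
    have hexp : (fun ω => (Y j 0 ω + Y j 1 ω) ^ 2)
        = fun ω => (Y j 0 ω) ^ 2 + (2 * (Y j 0 ω * Y j 1 ω) + (Y j 1 ω) ^ 2) := by
      funext ω; ring
    have hmi : Integrable (fun ω => Y j 0 ω * Y j 1 ω) ℙ := by
      exact (hYindep j).integrable_mul (hYint j 0) (hYint j 1)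
    have hI0 : Integrable (fun ω => (Y j 0 ω) ^ 2) ℙ := (hY2 j 0).integrable_sq
    have hI1 : Integrable (fun ω => (Y j 1 ω) ^ 2) ℙ := (hY2 j 1).integrable_sq
    have hI2 : Integrable (fun ω => 2 * (Y j 0 ω * Y j 1 ω)) ℙ := hmi.const_mul 2
    have hI3 : Integrable (fun ω => 2 * (Y j 0 ω * Y j 1 ω) + (Y j 1 ω) ^ 2) ℙ := hI2.add hI1
    rw [hexp, integral_add hI0 hI3, integral_add hI2 hI1,
      integral_const_mul, hmul j, hYsecond, hYsecond]
    ring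
  have hFval : ∀ j : Fin 2, ∫ ω, F j (Yv ω) ∂ℙ
      = (4 * ‖matRow A j‖ ^ 2) * (ω₀ * ((c j 0) ^ 2 + (c j 1) ^ 2) + 2 * (c j 0 * c j 1))
        - (4 * ⟪matRow A j, Dv⟫) * (c j 0 + c j 1) + ‖Dv‖ ^ 2 := by
    intro j
    have hsplit : (fun ω => F j (Yv ω))
        = fun ω => ((4 * ‖matRow A j‖ ^ 2) * (Y j 0 ω + Y j 1 ω) ^ 2
          - (4 * ⟪matRow A j, Dv⟫) * (Y j 0 ω + Y j 1 ω)) + ‖Dv‖ ^ 2 := rfl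
    have hSInt : Integrable (fun ω => Y j 0 ω + Y j 1 ω) ℙ := (hYint j 0).add (hYint j 1)
    have hI1 : Integrable (fun ω => (4 * ‖matRow A j‖ ^ 2) * (Y j 0 ω + Y j 1 ω) ^ 2) ℙ :=
      (hSsqInt j).const_mul _
    have hI2 : Integrable (fun ω => (4 * ⟪matRow A j, Dv⟫) * (Y j 0 ω + Y j 1 ω)) ℙ :=
      hSInt.const_mul _
    have hI3 : Integrable (fun ω => (4 * ‖matRow A j‖ ^ 2) * (Y j 0 ω + Y j 1 ω) ^ 2
        - (4 * ⟪matRow A j, Dv⟫) * (Y j 0 ω + Y j 1 ω)) ℙ := hI1.sub hI2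
    rw [hsplit, integral_add hI3 (integrable_const _), integral_sub hI1 hI2,
      integral_const_mul, integral_const_mul, integral_const, hM2 j, hM1 j]
    simp [measure_univ]
  -- put it together
  have hmain : ∫ ω, ‖g ω - gradient f x‖ ^ 2 ∂ℙ
      = ∑ j : Fin 2, (1 / 2 : ℝ) * ∫ ω, F j (Yv ω) ∂ℙ := by
    have h1 : ∫ ω, ‖g ω - gradient f x‖ ^ 2 ∂ℙ
        = ∫ ω, ∑ j : Fin 2, (if J ω = j then (1 : ℝ) else 0) * F j (Yv ω) ∂ℙ := by
      congr 1; funext ω; rw [hpt ω, hsum ω]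
    rw [h1, integral_finset_sum]
    · exact Finset.sum_congr rfl fun j _ => hprod j
    · intro j _
      refine (hFint j).bdd_mul (c := 1) ?_ (Filter.Eventually.of_forall fun ω => ?_)
      · exact ((Measurable.of_discrete
          (f := fun k : Fin 2 => if k = j then (1 : ℝ) else 0)).comp hJmeas).aestronglyMeasurable
      · by_cases h : J ω = j <;> simp [h]
  rw [ge_iff_le, hmain, hD, hnD, Fin.sum_univ_two, hFval 0, hFval 1,
    hn0, hn1, hipD0, hipD1, hnD, hc00, hc01, hc10, hc11, hL, hμ]
  have hRHS : (ω₀ - 1) * ((2 * a ^ 2) ^ 2 / (2 * (2 * b ^ 2) ^ 2)) * (8 * b ^ 4 * cc ^ 2)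
      = (ω₀ - 1) * (4 * a ^ 4 * cc ^ 2) := by
    field_simp; ring
  rw [hRHS]
  nlinarith [mul_nonneg (mul_nonneg (by positivity : (0:ℝ) ≤ 4 * a ^ 4) (sq_nonneg cc))
      (by linarith : (0:ℝ) ≤ ω₀ - 1),
    mul_nonneg (mul_nonneg (by positivity : (0:ℝ) ≤ 8 * b ^ 4) (sq_nonneg cc))
      (by linarith : (0:ℝ) ≤ ω₀)]
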